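/- Hardy probability vanishes in fully factorizable models: Suppose p_A(±1|x), p_B(±1|y), p_C(±1|z) are probability distributions for each setting (so p(+1|·)+p(-1|·)=1, values in [0,1]), and define p(a,b,c|x,y,z) = p_A(a|x)p_B(b|y)p_C(c|z). If p_A(+1|1)p_B(+1|0)=0, p_B(+1|1)p_C(+1|0)=0, p_A(+1|0)p_C(+1|1)=0, and p_A(-1|1)p_B(-1|1)p_C(-1|1)=0, then the Hardy probability p_A(+1|0)p_B(+1|0)p_C(+1|0)=0. -/
import Mathlib

/-- Hardy probability vanishes in fully factorizable (fully local) models.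
Outcome `true` ↔ +1, `false` ↔ -1; settings are `Fin 2`. -/
theorem hardy_zero_fully_local
    (pA pB pC : Bool → Fin 2 → ℝ)
    (hA : ∀ o x, pA o x ∈ Set.Icc (0:ℝ) 1)
    (hB : ∀ o x, pB o x ∈ Set.Icc (0:ℝ) 1)
    (hC : ∀ o x, pC o x ∈ Set.Icc (0:ℝ) 1)
    (hAn : ∀ x, pA true x + pA false x = 1)
    (hBn : ∀ y, pB true y + pB false y = 1)
    (hCn : ∀ z, pC true z + pC false z = 1)
    (h1 : pA true 1 * pB true 0 = 0)
    (h2 : pB true 1 * pC true 0 = 0)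
    (h3 : pA true 0 * pC true 1 = 0)
    (h4 : pA false 1 * pB false 1 * pC false 1 = 0) :
    pA true 0 * pB true 0 * pC true 0 = 0 := by
  by_contra h
  have hA0 : pA true 0 ≠ 0 := fun e => h (by rw [e]; ring)
  have hB0 : pB true 0 ≠ 0 := fun e => h (by rw [e]; ring)
  have hC0 : pC true 0 ≠ 0 := fun e => h (by rw [e]; ring)
  have eA : pA true 1 = 0 := by rcases mul_eq_zero.1 h1 with h' | h' <;> [exact h'; exact absurd h' hB0]
  have eB : pB true 1 = 0 := by rcases mul_eq_zero.1 h2 with h' | h' <;> [exact h'; exact absurd h' hC0]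
  have eC : pC true 1 = 0 := by rcases mul_eq_zero.1 h3 with h' | h' <;> [exact absurd h' hA0; exact h']
  have fA : pA false 1 = 1 := by have := hAn 1; rw [eA] at this; linarith
  have fB : pB false 1 = 1 := by have := hBn 1; rw [eB] at this; linarith
  have fC : pC false 1 = 1 := by have := hCn 1; rw [eC] at this; linarith
  rw [fA, fB, fC] at h4; norm_num at h4
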